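/- For every Heisenberg plane V ∈ 𝒱^k, the projection P_V : ℍⁿ → V is 1-Lipschitz with respect to the Korányi metric d: d(P_V(x), P_V(y)) ≤ d(x,y) for all x, y ∈ ℍⁿ. -/

import Mathlib

open scoped BigOperators
noncomputable section

abbrev Heis (n : ℕ) := EuclideanSpace ℝ (Fin (2*n)) × ℝ

def symA (n : ℕ) (x y : EuclideanSpace ℝ (Fin (2*n))) : ℝ :=
  ∑ i : Fin n, (x ⟨i.val + n, by have := i.isLt; omega⟩ * y ⟨i.val, by have := i.isLt; omega⟩
    - x ⟨i.val, by have := i.isLt; omega⟩ * y ⟨i.val + n, by have := i.isLt; omega⟩)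

def hMul (n : ℕ) (x y : Heis n) : Heis n :=
  (x.1 + y.1, x.2 + y.2 + 2 * symA n x.1 y.1)

def hInv (n : ℕ) (x : Heis n) : Heis n := (-x.1, -x.2)

def Knorm (n : ℕ) (x : Heis n) : ℝ := (‖x.1‖^4 + x.2^2) ^ ((1:ℝ)/4)

def Kdist (n : ℕ) (x y : Heis n) : ℝ := Knorm n (hMul n (hInv n y) x)

def isotropic (n : ℕ) (W : Submodule ℝ (EuclideanSpace ℝ (Fin (2*n)))) : Prop :=
  ∀ x ∈ W, ∀ y ∈ W, symA n x y = 0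

def plane (n : ℕ) (p : Heis n) (W : Submodule ℝ (EuclideanSpace ℝ (Fin (2*n)))) : Set (Heis n) :=
  {z | ∃ w ∈ W, z = hMul n p (w, (0:ℝ))}

def projH (n : ℕ) (W : Submodule ℝ (EuclideanSpace ℝ (Fin (2*n)))) (x : Heis n) : Heis n :=
  ((W.orthogonalProjection x.1 : EuclideanSpace ℝ (Fin (2*n))), 0)

def PV (n : ℕ) (p : Heis n) (W : Submodule ℝ (EuclideanSpace ℝ (Fin (2*n)))) (x : Heis n) : Heis n :=
  hMul n p (projH n W (hMul n (hInv n p) x))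


lemma symA_add_left (n : ℕ) (x y z : EuclideanSpace ℝ (Fin (2*n))) :
    symA n (x + y) z = symA n x z + symA n y z := by
  simp only [symA, PiLp.add_apply, ← Finset.sum_add_distrib]
  exact Finset.sum_congr rfl fun i _ => by ring

lemma symA_add_right (n : ℕ) (x y z : EuclideanSpace ℝ (Fin (2*n))) :
    symA n x (y + z) = symA n x y + symA n x z := by
  simp only [symA, PiLp.add_apply, ← Finset.sum_add_distrib]
  exact Finset.sum_congr rfl fun i _ => by ring

lemma symA_neg_left (n : ℕ) (x y : EuclideanSpace ℝ (Fin (2*n))) :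
    symA n (-x) y = - symA n x y := by
  simp only [symA, PiLp.neg_apply, ← Finset.sum_neg_distrib]
  exact Finset.sum_congr rfl fun i _ => by ring

lemma symA_swap (n : ℕ) (x y : EuclideanSpace ℝ (Fin (2*n))) :
    symA n y x = - symA n x y := by
  simp only [symA, ← Finset.sum_neg_distrib]
  exact Finset.sum_congr rfl fun i _ => by ring

lemma symA_self (n : ℕ) (x : EuclideanSpace ℝ (Fin (2*n))) :
    symA n x x = 0 := by
  have := symA_swap n x x; linarith

/-- The projection onto a Heisenberg `k`-plane is 1-Lipschitz for the Korányi metric. -/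
theorem stmt8 (n k : ℕ) (W : Submodule ℝ (EuclideanSpace ℝ (Fin (2*n))))
    (hW : isotropic n W) (hdim : Module.finrank ℝ W = k) (p x y : Heis n) :
    Kdist n (PV n p W x) (PV n p W y) ≤ Kdist n x y := by
  classical
  set E := EuclideanSpace ℝ (Fin (2*n)) with hE
  set P := W.orthogonalProjection with hPdef
  set a : E := (P (hMul n (hInv n p) x).1 : E) with ha
  set b : E := (P (hMul n (hInv n p) y).1 : E) with hb
  have haW : a ∈ W := (P (hMul n (hInv n p) x).1).2
  have hbW : b ∈ W := (P (hMul n (hInv n p) y).1).2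
  have hab : a - b = (P (x.1 - y.1) : E) := by
    have h : (hMul n (hInv n p) x).1 - (hMul n (hInv n p) y).1 = x.1 - y.1 := by
      show (-p.1 + x.1) - (-p.1 + y.1) = x.1 - y.1
      abel
    rw [ha, hb, ← Submodule.coe_sub, ← map_sub, h]
  have key : hMul n (hInv n (PV n p W y)) (PV n p W x) = (a - b, 0) := by
    have hx : PV n p W x = (p.1 + a, p.2 + 0 + 2 * symA n p.1 a) := rfl
    have hy : PV n p W y = (p.1 + b, p.2 + 0 + 2 * symA n p.1 b) := rfl
    rw [hx, hy]
    show (-(p.1 + b) + (p.1 + a),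
        -(p.2 + 0 + 2 * symA n p.1 b) + (p.2 + 0 + 2 * symA n p.1 a)
          + 2 * symA n (-(p.1 + b)) (p.1 + a)) = (a - b, 0)
    refine Prod.ext ?_ ?_
    · show -(p.1 + b) + (p.1 + a) = a - b
      abel
    · show -(p.2 + 0 + 2 * symA n p.1 b) + (p.2 + 0 + 2 * symA n p.1 a)
          + 2 * symA n (-(p.1 + b)) (p.1 + a) = 0
      have e1 : symA n (-(p.1 + b)) (p.1 + a)
          = -(symA n p.1 p.1 + symA n p.1 a + symA n b p.1 + symA n b a) := by
        rw [symA_neg_left, symA_add_right, symA_add_left, symA_add_left]; ring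
      rw [e1, symA_self, hW b hbW a haW, symA_swap n p.1 b]
      ring
  rw [Kdist, Kdist, key]
  unfold Knorm
  have hP' : ‖a - b‖ ≤ ‖x.1 - y.1‖ := by
    rw [hab]
    calc ‖(P (x.1 - y.1) : E)‖ = ‖P (x.1 - y.1)‖ := rfl
      _ ≤ ‖(P : E →L[ℝ] W)‖ * ‖x.1 - y.1‖ := (P : E →L[ℝ] W).le_opNorm _
      _ ≤ 1 * ‖x.1 - y.1‖ := by
          gcongr
          exact Submodule.orthogonalProjection_norm_le W
      _ = ‖x.1 - y.1‖ := one_mul _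
  have hfst : ‖(hMul n (hInv n y) x).1‖ = ‖x.1 - y.1‖ := by
    show ‖-y.1 + x.1‖ = ‖x.1 - y.1‖
    rw [neg_add_eq_sub]
  apply Real.rpow_le_rpow (by positivity) ?_ (by norm_num)
  show ‖a - b‖ ^ 4 + (0:ℝ) ^ 2 ≤ ‖(hMul n (hInv n y) x).1‖ ^ 4 + (hMul n (hInv n y) x).2 ^ 2
  calc ‖a - b‖ ^ 4 + (0:ℝ) ^ 2 = ‖a - b‖ ^ 4 := by norm_num
    _ ≤ ‖x.1 - y.1‖ ^ 4 := pow_le_pow_left₀ (norm_nonneg _) hP' 4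
    _ = ‖(hMul n (hInv n y) x).1‖ ^ 4 := by rw [hfst]
    _ ≤ _ := le_add_of_nonneg_right (sq_nonneg _)
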